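/- Let V and W be finite-dimensional real inner product spaces and d : V → W linear. Suppose for all u ∈ V orthogonal to ker(d) one has ‖u‖ ≤ C·‖d u‖ with C > 0. Then for every t in range(d) there exists v ∈ V with ⟨t, d v⟩ ≥ (1/C)·‖v‖·‖t‖, i.e. the inf-sup condition inf_{t ∈ range(d)} sup_{v ∈ V} ⟨t, d v⟩/(‖t‖·‖v‖) ≥ 1/C holds. -/

import Mathlib

open scoped RealInnerProductSpace

/-- The Poincaré inequality implies the inf-sup condition (Lemma 3.2, forward direction). -/
theorem poincare_implies_inf_sup
    {V W : Type*} [NormedAddCommGroup V] [InnerProductSpace ℝ V]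
    [NormedAddCommGroup W] [InnerProductSpace ℝ W]
    [FiniteDimensional ℝ V] [FiniteDimensional ℝ W]
    (d : V →ₗ[ℝ] W) (C : ℝ) (hC : 0 < C)
    (hP : ∀ u : V, (∀ v : V, d v = 0 → ⟪u, v⟫ = 0) → ‖u‖ ≤ C * ‖d u‖) :
    ∀ t ∈ Set.range d, t ≠ 0 →
      ∃ v : V, v ≠ 0 ∧ ⟪t, d v⟫ ≥ (1 / C) * ‖v‖ * ‖t‖ := by
  rintro t ⟨v₀, rfl⟩ ht
  set K := LinearMap.ker d with hK
  set v : V := v₀ - (K.orthogonalProjectionOnto v₀ : V) with hv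
  have hvperp : v ∈ Kᗮ := K.sub_starProjection_mem_orthogonal v₀
  have hdv : d v = d v₀ := by
    have hmem : ((K.orthogonalProjectionOnto v₀ : V)) ∈ K := (K.orthogonalProjectionOnto v₀).2
    simp only [hv, map_sub]
    rw [LinearMap.mem_ker.mp hmem]
    simp
  have hineq : ‖v‖ ≤ C * ‖d v₀‖ := by
    have := hP v (fun w hw => by
      have := hvperp w (LinearMap.mem_ker.mpr hw)
      rwa [real_inner_comm] at this)
    rwa [hdv] at this
  refine ⟨v, ?_, ?_⟩
  · intro h
    apply ht
    rw [← hdv, h, map_zero]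
  · rw [hdv, real_inner_self_eq_norm_mul_norm]
    have hnt : 0 < ‖d v₀‖ := norm_pos_iff.mpr ht
    have : (1 / C) * ‖v‖ ≤ ‖d v₀‖ := by
      rw [div_mul_eq_mul_div, one_mul, div_le_iff₀ hC]
      linarith [hineq]
    calc (1 / C) * ‖v‖ * ‖d v₀‖ ≤ ‖d v₀‖ * ‖d v₀‖ :=
      mul_le_mul_of_nonneg_right this hnt.le
    _ = ‖d v₀‖ * ‖d v₀‖ := rfl
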